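/- (Kronecker's approximation theorem, geometric form) Let c ∈ ℝ^m be a vector whose components are linearly independent over ℚ. Then for every point p ∈ ℝ^m and every ε > 0, there exist t ∈ ℝ and z ∈ ℤ^m such that the Euclidean distance ‖p + t·c − z‖ < ε. In other words, every line in ℝ^m with direction vector c passes within distance ε of a lattice point. -/

import Mathlib

open Finset

namespace KronAux
open Submodule Module Filter
noncomputable section
variable {m : ℕ}

def intVec {m : ℕ} (z : Fin m → ℤ) : EuclideanSpace ℝ (Fin m) := WithLp.toLp 2 (fun i => (z i : ℝ))

@[simp] lemma intVec_apply {m : ℕ} (z : Fin m → ℤ) (i : Fin m) : intVec z i = z i := rfl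

def kronSub (c : EuclideanSpace ℝ (Fin m)) : AddSubgroup (EuclideanSpace ℝ (Fin m)) where
  carrier := {x | ∃ (t : ℝ) (z : Fin m → ℤ), x = t • c + intVec z}
  zero_mem' := ⟨0, 0, by ext i; simp [intVec]⟩
  add_mem' := by
    rintro a b ⟨t, z, rfl⟩ ⟨s, y, rfl⟩
    refine ⟨t + s, z + y, ?_⟩
    ext i; simp [intVec]; ring
  neg_mem' := by
    rintro a ⟨t, z, rfl⟩
    refine ⟨-t, -z, ?_⟩
    ext i; simp [intVec]; ring

lemma euclid_decomp (x : EuclideanSpace ℝ (Fin m)) :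
    x = ∑ j, x j • EuclideanSpace.single j (1:ℝ) := by
  have := (EuclideanSpace.basisFun (Fin m) ℝ).sum_repr x
  simpa [EuclideanSpace.basisFun_apply, EuclideanSpace.basisFun_repr] using this.symm

theorem zsmul_tendsto_aux (W : Type*) [NormedAddCommGroup W] [NormedSpace ℝ W]
    (w : ℕ → W) (hwpos : ∀ n, 0 < ‖w n‖)
    (ulim : W)
    (hconv : Tendsto (fun n => ‖w n‖⁻¹ • w n) atTop (nhds ulim))
    (hwnorm0 : Tendsto (fun n => ‖w n‖) atTop (nhds 0)) (r : ℝ) :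
    Tendsto (fun n => (⌊r / ‖w n‖⌋ : ℤ) • w n) atTop (nhds (r • ulim)) := by
  have hka : ∀ n, (⌊r / ‖w n‖⌋ : ℤ) • w n
      = ((⌊r / ‖w n‖⌋ : ℝ) * ‖w n‖) • (‖w n‖⁻¹ • w n) := by
    intro n
    rw [smul_smul, mul_assoc, mul_inv_cancel₀ (hwpos n).ne', mul_one,
      Int.cast_smul_eq_zsmul]
  have ha : Tendsto (fun n => (⌊r / ‖w n‖⌋ : ℝ) * ‖w n‖) atTop (nhds r) := by
    rw [tendsto_iff_dist_tendsto_zero]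
    refine squeeze_zero (fun n => dist_nonneg) (fun n => ?_) hwnorm0
    rw [Real.dist_eq, abs_le]
    have hp := hwpos n
    have h1 : (⌊r / ‖w n‖⌋ : ℝ) * ‖w n‖ ≤ r := by
      calc (⌊r / ‖w n‖⌋ : ℝ) * ‖w n‖ ≤ (r / ‖w n‖) * ‖w n‖ :=
            mul_le_mul_of_nonneg_right (Int.floor_le _) hp.le
        _ = r := div_mul_cancel₀ _ hp.ne'
    have h2 : r - ‖w n‖ ≤ (⌊r / ‖w n‖⌋ : ℝ) * ‖w n‖ := by
      have hf : r / ‖w n‖ - 1 ≤ (⌊r / ‖w n‖⌋ : ℝ) := (Int.sub_one_lt_floor (r / ‖w n‖)).le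
      have := mul_le_mul_of_nonneg_right hf hp.le
      rw [sub_mul, one_mul, div_mul_cancel₀ _ hp.ne'] at this
      linarith
    constructor <;> linarith
  simp only [hka]
  exact ha.smul hconv

set_option maxHeartbeats 1000000 in
theorem kron_dense (c : EuclideanSpace ℝ (Fin m))
    (hc : ∀ q : Fin m → ℤ, ∑ i, (q i : ℝ) * c i = 0 → q = 0) :
    Dense ((kronSub c : AddSubgroup (EuclideanSpace ℝ (Fin m))) :
      Set (EuclideanSpace ℝ (Fin m))) := by
  set G : AddSubgroup (EuclideanSpace ℝ (Fin m)) := (kronSub c).topologicalClosure with hG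
  have hGclosed : IsClosed (G : Set (EuclideanSpace ℝ (Fin m))) :=
    (kronSub c).isClosed_topologicalClosure
  -- the maximal subspace inside G
  set V : Submodule ℝ (EuclideanSpace ℝ (Fin m)) :=
    { carrier := {x | ∀ r : ℝ, r • x ∈ G}
      zero_mem' := fun r => by simpa using G.zero_mem
      add_mem' := fun {a b} ha hb r => by simpa [smul_add] using G.add_mem (ha r) (hb r)
      smul_mem' := fun r {x} hx s => by simpa [smul_smul] using hx (s * r) } with hV
  have hVG : ∀ x ∈ V, x ∈ G := fun x hx => by simpa using hx 1
  have hcV : c ∈ V := fun r =>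
    (kronSub c).le_topologicalClosure ⟨r, 0, by ext i; simp [intVec]⟩
  have hZG : ∀ z : Fin m → ℤ, intVec z ∈ G := fun z =>
    (kronSub c).le_topologicalClosure ⟨0, z, by ext i; simp [intVec]⟩
  -- the orthogonal projection onto Vᗮ
  set π : EuclideanSpace ℝ (Fin m) →ₗ[ℝ] ↥Vᗮ := (orthogonalProjection Vᗮ).toLinearMap with hπdef
  have hπmem : ∀ x : EuclideanSpace ℝ (Fin m), ∀ hx : x ∈ V, π x = 0 := fun x hx =>
    orthogonalProjection_mem_subspace_orthogonalComplement_eq_zero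
      (Submodule.le_orthogonal_orthogonal V hx)
  have hπself : ∀ w : ↥Vᗮ, π (w : EuclideanSpace ℝ (Fin m)) = w := fun w =>
    orthogonalProjection_mem_subspace_eq_self w
  have hπ : ∀ x : EuclideanSpace ℝ (Fin m), (π x : EuclideanSpace ℝ (Fin m))
      = x - orthogonalProjection V x := by
    intro x
    have h0 : π ((orthogonalProjection V x : EuclideanSpace ℝ (Fin m))) = 0 :=
      hπmem _ (SetLike.coe_mem _)
    have h1 : (π (x - orthogonalProjection V x) : EuclideanSpace ℝ (Fin m))
        = x - orthogonalProjection V x :=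
      Submodule.starProjection_eq_self_iff.mpr (Submodule.sub_starProjection_mem_orthogonal (K := V) x)
    have h2 : π x = π (orthogonalProjection V x : EuclideanSpace ℝ (Fin m))
        + π (x - orthogonalProjection V x) := by
      rw [← map_add]; congr 1; abel
    rw [h2, h0, zero_add, h1]
  have hπG : ∀ x ∈ G, (π x : EuclideanSpace ℝ (Fin m)) ∈ G := by
    intro x hx
    rw [hπ]
    exact G.sub_mem hx (hVG _ (SetLike.coe_mem _))
  -- the discrete part
  set D : Submodule ℤ ↥Vᗮ :=
    { carrier := {w | (w : EuclideanSpace ℝ (Fin m)) ∈ G}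
      zero_mem' := by simpa using G.zero_mem
      add_mem' := fun {a b} ha hb => by simpa using G.add_mem ha hb
      smul_mem' := fun n {x} hx => by
        simpa using AddSubgroup.zsmul_mem G hx n } with hD
  have hsingleD : ∀ j, π (EuclideanSpace.single j (1:ℝ)) ∈ D := by
    intro j
    have hsz : EuclideanSpace.single j (1:ℝ) = intVec (fun i => if i = j then 1 else 0) := by
      ext i
      simp [intVec, EuclideanSpace.single_apply, apply_ite]
    show (π (EuclideanSpace.single j (1:ℝ)) : EuclideanSpace ℝ (Fin m)) ∈ G
    exact hπG _ (hsz ▸ hZG _)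
  have key : ∃ δ > (0:ℝ), ∀ w : ↥Vᗮ, (w : EuclideanSpace ℝ (Fin m)) ∈ G → ‖w‖ < δ → w = 0 := by
    by_contra hcon
    push_neg at hcon
    choose w hwG hwlt hwne using fun n : ℕ => hcon (1/(n+1)) (by positivity)
    have hwpos : ∀ n, 0 < ‖w n‖ := fun n => norm_pos_iff.mpr (hwne n)
    have husphere : ∀ n, ‖w n‖⁻¹ • w n ∈ Metric.sphere (0 : ↥Vᗮ) 1 := fun n => by
      simp only [Metric.mem_sphere, dist_zero_right, norm_smul, norm_inv, norm_norm]
      exact inv_mul_cancel₀ (hwpos n).ne'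
    obtain ⟨ulim, hmem, φ, hφ, hconv⟩ :=
      (isCompact_sphere (0 : ↥Vᗮ) 1).tendsto_subseq husphere
    have hwnorm0 : Tendsto (fun n => ‖w (φ n)‖) atTop (nhds 0) := by
      have hb : ∀ n : ℕ, ‖w (φ n)‖ ≤ 1/(n+1) := by
        intro n
        refine le_trans (hwlt (φ n)).le ?_
        have h0 : n ≤ φ n := hφ.le_apply
        have h1 : (n : ℝ) + 1 ≤ (φ n : ℝ) + 1 := by exact_mod_cast Nat.add_le_add_right h0 1
        apply one_div_le_one_div_of_le
        · positivity
        · exact h1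
      exact squeeze_zero (fun n => norm_nonneg _) hb tendsto_one_div_add_atTop_nhds_zero_nat
    have hlim : ∀ r : ℝ, r • (ulim : EuclideanSpace ℝ (Fin m)) ∈ G := by
      intro r
      have ht : Tendsto (fun n => ((⌊r / ‖w (φ n)‖⌋ : ℤ) • w (φ n) : ↥Vᗮ))
          atTop (nhds (r • ulim)) :=
        zsmul_tendsto_aux ↥Vᗮ (fun n => w (φ n)) (fun n => hwpos (φ n)) ulim hconv hwnorm0 r
      have htE : Tendsto
          (fun n => (((⌊r / ‖w (φ n)‖⌋ : ℤ) • w (φ n) : ↥Vᗮ) : EuclideanSpace ℝ (Fin m)))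
          atTop (nhds (r • (ulim : EuclideanSpace ℝ (Fin m)))) := by
        have := (continuous_subtype_val.tendsto (r • ulim)).comp ht
        simpa [Function.comp_def] using this
      refine hGclosed.mem_of_tendsto htE (Filter.Eventually.of_forall fun n => ?_)
      show (((⌊r / ‖w (φ n)‖⌋ : ℤ) • w (φ n) : ↥Vᗮ) : EuclideanSpace ℝ (Fin m)) ∈ G
      have : (((⌊r / ‖w (φ n)‖⌋ : ℤ) • w (φ n) : ↥Vᗮ) : EuclideanSpace ℝ (Fin m))
          = (⌊r / ‖w (φ n)‖⌋ : ℤ) • ((w (φ n) : EuclideanSpace ℝ (Fin m))) := by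
        simp
      rw [this]
      exact AddSubgroup.zsmul_mem G (hwG (φ n)) _
    have huV : (ulim : EuclideanSpace ℝ (Fin m)) ∈ V := fun r => hlim r
    have hzero : ulim = 0 := by
      have h0 : (ulim : EuclideanSpace ℝ (Fin m)) ∈ (⊥ : Submodule ℝ (EuclideanSpace ℝ (Fin m))) :=
        (Submodule.orthogonal_disjoint V).le_bot ⟨huV, SetLike.coe_mem ulim⟩
      exact Subtype.ext (by simpa using h0)
    rw [hzero] at hmem
    simpa using hmem
  have hdisc : DiscreteTopology D := by
    obtain ⟨δ, hδ, hkey⟩ := key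
    refine discreteTopology_iff_isOpen_singleton_zero.mpr ?_
    have hs : {(0 : D)} = (fun d : D => (d : ↥Vᗮ)) ⁻¹' Metric.ball 0 δ := by
      ext d
      simp only [Set.mem_singleton_iff, Set.mem_preimage, Metric.mem_ball, dist_zero_right]
      constructor
      · rintro rfl; simpa using hδ
      · intro hd
        exact Subtype.ext (hkey _ d.2 hd)
    rw [hs]
    exact Metric.isOpen_ball.preimage continuous_subtype_val
  have hspan : IsZLattice ℝ D := by
    constructor
    rw [← top_le_iff]
    rintro x -
    have hx : x = π (x : EuclideanSpace ℝ (Fin m)) := (hπself x).symm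
    rw [hx, euclid_decomp (x : EuclideanSpace ℝ (Fin m)), map_sum]
    refine Submodule.sum_mem _ fun j _ => ?_
    rw [map_smul]
    exact Submodule.smul_mem _ _ (Submodule.subset_span (hsingleD j))
  -- now show V = ⊤
  have hVtop : V = ⊤ := by
    haveI := hdisc
    haveI := hspan
    haveI : Module.Free ℤ D := ZLattice.module_free ℝ D
    haveI : Module.Finite ℤ D := ZLattice.module_finite ℝ D
    set b := Module.Free.chooseBasis ℤ D with hb
    set bb := b.ofZLatticeBasis ℝ D with hbb
    have hempty : IsEmpty (Module.Free.ChooseBasisIndex ℤ D) := by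
      by_contra hne
      rw [not_isEmpty_iff] at hne
      obtain ⟨i₀⟩ := hne
      set F : EuclideanSpace ℝ (Fin m) →ₗ[ℝ] ℝ := (bb.coord i₀) ∘ₗ π with hF
      set q : Fin m → ℤ :=
        fun j => b.repr ⟨π (EuclideanSpace.single j (1:ℝ)), hsingleD j⟩ i₀ with hq
      have hqF : ∀ j, F (EuclideanSpace.single j (1:ℝ)) = (q j : ℝ) := by
        intro j
        have h := Basis.ofZLatticeBasis_repr_apply ℝ D b
          ⟨π (EuclideanSpace.single j (1:ℝ)), hsingleD j⟩ i₀
        show bb.coord i₀ (π (EuclideanSpace.single j (1:ℝ))) = (q j : ℝ)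
        rw [Basis.coord_apply, hq]
        exact h
      have hFdecomp : ∀ x : EuclideanSpace ℝ (Fin m),
          F x = ∑ j, x j * F (EuclideanSpace.single j (1:ℝ)) := by
        intro x
        conv_lhs => rw [euclid_decomp x]
        rw [map_sum]
        exact Finset.sum_congr rfl fun j _ => by rw [map_smul, smul_eq_mul]
      have hq0 : q = 0 := by
        apply hc
        have hFc : F c = 0 := by
          show bb.coord i₀ (π c) = 0
          rw [hπmem c hcV, map_zero]
        calc ∑ i, (q i : ℝ) * c i = ∑ i, c i * F (EuclideanSpace.single i (1:ℝ)) := by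
              refine Finset.sum_congr rfl fun i _ => ?_
              rw [hqF i, mul_comm]
          _ = F c := (hFdecomp c).symm
          _ = 0 := hFc
      have hx1 : F ((bb i₀ : ↥Vᗮ) : EuclideanSpace ℝ (Fin m)) = 1 := by
        show bb.coord i₀ (π ((bb i₀ : ↥Vᗮ) : EuclideanSpace ℝ (Fin m))) = 1
        rw [hπself (bb i₀), Basis.coord_apply, Basis.repr_self, Finsupp.single_eq_same]
      rw [hFdecomp] at hx1
      have : ∀ j, F (EuclideanSpace.single j (1:ℝ)) = 0 := by
        intro j
        rw [hqF j]
        simp [hq0]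
      simp only [this, mul_zero, Finset.sum_const_zero] at hx1
      exact one_ne_zero hx1.symm
    have hrank : Module.finrank ℝ ↥Vᗮ = 0 := by
      haveI := hempty
      rw [← ZLattice.rank ℝ D, finrank_eq_card_chooseBasisIndex]
      simp
    have hbot : Vᗮ = ⊥ := Submodule.finrank_eq_zero.mp hrank
    have horth := Submodule.orthogonal_orthogonal V
    rw [hbot] at horth
    simpa using horth.symm
  intro x
  have hxG : x ∈ G := hVG x (hVtop ▸ Submodule.mem_top)
  exact hxG

end
end KronAux

/-- Kronecker's approximation theorem, geometric form: if the components of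
`c ∈ ℝ^m` are linearly independent over `ℚ`, then every line with direction
vector `c` passes within Euclidean distance `ε` of a lattice point. -/
theorem stmt_7 (m : ℕ) (c : Fin m → ℝ) (hc : LinearIndependent ℚ c)
    (p : Fin m → ℝ) (ε : ℝ) (hε : 0 < ε) :
    ∃ (t : ℝ) (z : Fin m → ℤ),
      Real.sqrt (∑ i, (p i + t * c i - (z i : ℝ)) ^ 2) < ε := by
  have hc' : ∀ q : Fin m → ℤ, ∑ i, (q i : ℝ) * c i = 0 → q = 0 := by
    intro q hq
    have h := Fintype.linearIndependent_iff.mp hc (fun i => (q i : ℚ))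
    have hsum : ∑ i, ((q i : ℚ)) • c i = 0 := by
      rw [← hq]
      refine Finset.sum_congr rfl fun i _ => ?_
      rw [Rat.smul_def]
      push_cast
      ring
    funext i
    exact_mod_cast h hsum i
  have hd := KronAux.kron_dense (m := m) (WithLp.toLp 2 c) hc'
  obtain ⟨y, hy, hlt⟩ := hd.exists_dist_lt (WithLp.toLp 2 p) hε
  obtain ⟨t, z, hyz⟩ := hy
  refine ⟨-t, z, ?_⟩
  have hdist := hlt
  rw [EuclideanSpace.dist_eq] at hdist
  have heq : ∀ i, dist ((WithLp.toLp 2 p : EuclideanSpace ℝ (Fin m)) i) (y i) ^ 2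
      = (p i + (-t) * c i - (z i : ℝ)) ^ 2 := by
    intro i
    rw [Real.dist_eq, sq_abs]
    have hap : y i = t * c i + (z i : ℝ) := by rw [hyz]; rfl
    rw [hap]
    ring
  rw [Finset.sum_congr rfl (fun i _ => heq i)] at hdist
  exact hdist
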